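/- Let I_n be the n×n identity matrix viewed as a hole-free SNP matrix, and let 2 ≤ k < n-2. Then the minimum of D_{I_n,k}(H₁,...,H_k) over all k-tuples of haplotypes in {0,1}^n equals n-(k-1). -/
import Mathlib


open Finset

/-- Hamming distance between binary strings. -/
def hamming {n : ℕ} (r H : Fin n → Bool) : ℕ :=
  (univ.filter (fun j => r j ≠ H j)).card

/-- The n×n identity matrix viewed as a hole-free SNP matrix: its rows are the
standard basis vectors e₁,...,e_n. -/
def IdentM (n : ℕ) : Multiset (Fin n → Bool) :=
  Finset.univ.val.map (fun i j => decide (j = i))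

/-- `D_{M,k}(H₁,...,H_k) = Σ over rows r of M of min_i d(r,H_i)` (Hamming distance). -/
noncomputable def Dk {n k : ℕ} (M : Multiset (Fin n → Bool)) (H : Fin k → Fin n → Bool) : ℕ :=
  (M.map (fun r => sInf {t : ℕ | ∃ i : Fin k, hamming r (H i) = t})).sum
def ee {n : ℕ} (i : Fin n) : Fin n → Bool := fun j => decide (j = i)

lemma hamming_eq_zero_iff {n : ℕ} (r H : Fin n → Bool) : hamming r H = 0 ↔ r = H := by
  simp [hamming, Finset.filter_eq_empty_iff, funext_iff]

lemma Dk_ident {n k : ℕ} (H : Fin k → Fin n → Bool) :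
    Dk (IdentM n) H = ∑ j : Fin n, sInf {t : ℕ | ∃ i : Fin k, hamming (ee j) (H i) = t} := by
  rw [Dk, IdentM, Multiset.map_map]; rfl

lemma hamming_ee_zero {n : ℕ} (j : Fin n) : hamming (ee j) (fun _ => false) = 1 := by
  simp [hamming, ee, Finset.filter_eq']

lemma hamming_ee_ee {n : ℕ} (j m : Fin n) (h : j ≠ m) : hamming (ee j) (ee m) = 2 := by
  have : (univ.filter (fun x => ee j x ≠ ee m x)) = {j, m} := by
    ext x
    simp only [mem_filter, mem_univ, true_and, mem_insert, mem_singleton, ee]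
    rcases eq_or_ne x j with rfl | hj <;> rcases eq_or_ne x m with rfl | hm <;>
      simp_all
  rw [hamming, this, Finset.card_insert_of_notMem (by simpa using h), Finset.card_singleton]

lemma ee_inj {n : ℕ} {j m : Fin n} (h : ee j = ee m) : j = m := by
  have := congrFun h j
  simpa [ee] using this


/-- For 2 ≤ k < n-2, the minimum of `D_{Iₙ,k}` over all k-tuples of haplotypes
equals n - (k-1). -/
theorem Dk_identity_min (n k : ℕ) (hk2 : 2 ≤ k) (hkn : k < n - 2) :
    sInf {v : ℕ | ∃ H : Fin k → Fin n → Bool, Dk (IdentM n) H = v} = n - (k - 1) := by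
  have hk0 : 0 < k := by omega
  have hn : k + 2 < n := by omega
  -- witness
  set W : Fin k → Fin n → Bool := fun i j => decide ((j : ℕ) + 1 = (i : ℕ)) with hW
  have hWval : Dk (IdentM n) W = n - (k - 1) := by
    rw [Dk_ident]
    have key : ∀ j : Fin n,
        sInf {t : ℕ | ∃ i : Fin k, hamming (ee j) (W i) = t}
          = if (j : ℕ) + 1 < k then 0 else 1 := by
      intro j
      by_cases hj : (j : ℕ) + 1 < k
      · rw [if_pos hj]
        have hmem : (0 : ℕ) ∈ {t : ℕ | ∃ i : Fin k, hamming (ee j) (W i) = t} := by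
          refine ⟨⟨(j : ℕ) + 1, hj⟩, ?_⟩
          rw [hamming_eq_zero_iff]
          funext x
          simp only [hW, ee]
          apply decide_eq_decide.mpr
          constructor
          · rintro rfl; rfl
          · intro h; exact Fin.ext (by omega)
        exact Nat.le_zero.mp (Nat.sInf_le hmem)
      · rw [if_neg hj]
        have h1 : (1 : ℕ) ∈ {t : ℕ | ∃ i : Fin k, hamming (ee j) (W i) = t} := by
          refine ⟨⟨0, hk0⟩, ?_⟩
          have : W ⟨0, hk0⟩ = fun _ => false := by funext x; simp [hW]
          rw [this]; exact hamming_ee_zero j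
        have h0 : (0 : ℕ) ∉ {t : ℕ | ∃ i : Fin k, hamming (ee j) (W i) = t} := by
          rintro ⟨i, hi⟩
          rw [hamming_eq_zero_iff] at hi
          have := congrFun hi j
          simp [ee, hW] at this
          omega
        have hne : {t : ℕ | ∃ i : Fin k, hamming (ee j) (W i) = t}.Nonempty := ⟨1, h1⟩
        have := Nat.sInf_mem hne
        have hle := Nat.sInf_le h1
        interval_cases h : sInf {t : ℕ | ∃ i : Fin k, hamming (ee j) (W i) = t}
        · exact absurd this h0
        · rfl
    simp only [key]
    rw [Finset.sum_ite, Finset.sum_const_zero, Finset.sum_const, zero_add, smul_eq_mul, mul_one]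
    have : univ.filter (fun j : Fin n => ¬ ((j : ℕ) + 1 < k)) = Ici (⟨k - 1, by omega⟩ : Fin n) := by
      ext x
      simp only [mem_filter, mem_univ, true_and, Finset.mem_Ici, Fin.le_def]
      omega
    rw [this, Fin.card_Ici]
  apply le_antisymm
  · exact Nat.sInf_le (show (n - (k-1)) ∈ {v : ℕ | ∃ H : Fin k → Fin n → Bool, Dk (IdentM n) H = v} from ⟨W, hWval⟩)
  · refine le_csInf ⟨n - (k-1), W, hWval⟩ ?_
    rintro v ⟨H, rfl⟩
    rw [Dk_ident]
    set S := univ.filter (fun j : Fin n => ∃ i, H i = ee j) with hS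
    set f : Fin n → Fin k := fun j =>
      if h : ∃ i, H i = ee j then h.choose else ⟨0, hk0⟩ with hf
    have hfS : ∀ j ∈ S, H (f j) = ee j := by
      intro j hj
      rw [hS, mem_filter] at hj
      rw [hf]; simp only [dif_pos hj.2]
      exact hj.2.choose_spec
    have hinj : Set.InjOn f S := by
      intro a ha b hb hab
      have h1 := hfS a ha
      have h2 := hfS b hb
      rw [hab] at h1
      exact ee_inj (h1 ▸ h2 ▸ rfl)
    have hSk : S.card ≤ k := by
      have := Finset.card_le_card_of_injOn f (fun _ _ => mem_univ _) hinj
      simpa using this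
    have hSn : S.card ≤ n := by
      have := Finset.card_le_card (Finset.subset_univ S)
      simpa using this
    have hne : ∀ j : Fin n, {t : ℕ | ∃ i, hamming (ee j) (H i) = t}.Nonempty :=
      fun j => ⟨hamming (ee j) (H ⟨0, hk0⟩), ⟨0, hk0⟩, rfl⟩
    have hmin1 : ∀ j : Fin n, j ∉ S → 1 ≤ sInf {t : ℕ | ∃ i, hamming (ee j) (H i) = t} := by
      intro j hj
      by_contra h
      push_neg at h
      have h0 : sInf {t : ℕ | ∃ i, hamming (ee j) (H i) = t} = 0 := by omega
      obtain ⟨i, hi⟩ := Nat.sInf_mem (hne j)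
      rw [h0, hamming_eq_zero_iff] at hi
      exact hj (mem_filter.mpr ⟨mem_univ _, ⟨i, hi.symm ▸ rfl⟩⟩)
    rcases lt_or_eq_of_le hSk with hlt | heq
    · -- at most k-1 haplotypes are basis rows
      have hsum : (univ \ S).card * 1 ≤ ∑ j ∈ univ \ S,
          sInf {t : ℕ | ∃ i, hamming (ee j) (H i) = t} := by
        have := Finset.card_nsmul_le_sum (univ \ S)
          (fun j => sInf {t : ℕ | ∃ i, hamming (ee j) (H i) = t}) 1
          (fun j hj => hmin1 j (Finset.mem_sdiff.mp hj).2)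
        simpa [mul_comm] using this
      have hsub : ∑ j ∈ univ \ S, sInf {t : ℕ | ∃ i, hamming (ee j) (H i) = t}
          ≤ ∑ j : Fin n, sInf {t : ℕ | ∃ i, hamming (ee j) (H i) = t} :=
        Finset.sum_le_sum_of_subset (Finset.sdiff_subset)
      have hcard : (univ \ S).card = n - S.card := by
        rw [Finset.card_sdiff_of_subset (Finset.subset_univ S)]
        simp
      omega
    · -- all k haplotypes are basis rows
      have himg : S.image f = univ := by
        apply Finset.eq_univ_of_card
        rw [Finset.card_image_of_injOn hinj, heq]
        simp
      have hall : ∀ i : Fin k, ∃ m : Fin n, H i = ee m := by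
        intro i
        have : i ∈ S.image f := himg ▸ mem_univ i
        obtain ⟨j, hj, hji⟩ := Finset.mem_image.mp this
        exact ⟨j, hji ▸ hfS j hj⟩
      have hmin2 : ∀ j : Fin n, j ∉ S → 2 ≤ sInf {t : ℕ | ∃ i, hamming (ee j) (H i) = t} := by
        intro j hj
        obtain ⟨i, hi⟩ := Nat.sInf_mem (hne j)
        obtain ⟨m, hm⟩ := hall i
        have hmj : m ≠ j := by
          rintro rfl
          exact hj (mem_filter.mpr ⟨mem_univ _, ⟨i, hm⟩⟩)
        rw [hm, hamming_ee_ee j m (Ne.symm hmj)] at hi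
        omega
      have hsum : (univ \ S).card * 2 ≤ ∑ j ∈ univ \ S,
          sInf {t : ℕ | ∃ i, hamming (ee j) (H i) = t} := by
        have := Finset.card_nsmul_le_sum (univ \ S)
          (fun j => sInf {t : ℕ | ∃ i, hamming (ee j) (H i) = t}) 2
          (fun j hj => hmin2 j (Finset.mem_sdiff.mp hj).2)
        simpa [mul_comm] using this
      have hsub : ∑ j ∈ univ \ S, sInf {t : ℕ | ∃ i, hamming (ee j) (H i) = t}
          ≤ ∑ j : Fin n, sInf {t : ℕ | ∃ i, hamming (ee j) (H i) = t} :=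
        Finset.sum_le_sum_of_subset (Finset.sdiff_subset)
      have hcard : (univ \ S).card = n - S.card := by
        rw [Finset.card_sdiff_of_subset (Finset.subset_univ S)]
        simp
      omega
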